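/- Let A and B be finite non-empty subsets of the integers with |A| ≥ |B|. Then there exist elements b₁, b₂, b₃ ∈ B such that |A + {b₁, b₂, b₃}| ≥ |A| + |B| - 1. -/

import Mathlib

open Finset Pointwise

private lemma dvd_zero_of_close {d x : ℤ} (hdvd : d ∣ x) (h1 : -d < x) (h2 : x < d) : x = 0 := by
  rcases hdvd with ⟨c, rfl⟩
  rcases lt_trichotomy c 0 with h | h | h
  · nlinarith
  · simp [h]
  · nlinarith

private lemma add_singleton' (A : Finset ℤ) (x : ℤ) : A + {x} = A.image (· + x) := by
  ext w
  simp only [Finset.mem_add, Finset.mem_image, Finset.mem_singleton]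
  constructor
  · rintro ⟨y, hy, c, rfl, rfl⟩; exact ⟨y, hy, rfl⟩
  · rintro ⟨y, hy, rfl⟩; exact ⟨y, hy, x, rfl, rfl⟩

private lemma triple_eq (A : Finset ℤ) (x y z : ℤ) :
    A + ({x, y, z} : Finset ℤ) = (A.image (· + x) ∪ A.image (· + z)) ∪ A.image (· + y) := by
  have h : ({x, y, z} : Finset ℤ) = ({x} ∪ {z}) ∪ {y} := by
    ext w; simp [Finset.mem_insert]; tauto
  rw [h, Finset.add_union, Finset.add_union, add_singleton', add_singleton', add_singleton']

private lemma aux1 (A : Finset ℤ) (d : ℤ) (hd : 0 < d) :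
    (A.image (· % d)).card ≤ ((A.image (· + d)) \ A).card := by
  classical
  apply Finset.card_le_card_of_injOn
    (fun c => if h : (A.filter (fun a => a % d = c)).Nonempty
      then (A.filter (fun a => a % d = c)).max' h + d else 0)
  · intro c hc
    obtain ⟨a, ha, rfl⟩ := Finset.mem_image.mp hc
    have hne : (A.filter (fun x => x % d = a % d)).Nonempty := ⟨a, by simp [ha]⟩
    beta_reduce
    rw [Finset.mem_coe, dif_pos hne]
    have hmem := (A.filter (fun x => x % d = a % d)).max'_mem hne
    rw [Finset.mem_filter] at hmem
    rw [Finset.mem_sdiff]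
    refine ⟨Finset.mem_image.mpr ⟨_, hmem.1, rfl⟩, ?_⟩
    intro hcon
    have hmm : (A.filter (fun x => x % d = a % d)).max' hne + d
        ∈ A.filter (fun x => x % d = a % d) := by
      rw [Finset.mem_filter]
      refine ⟨hcon, ?_⟩
      have h2 : ((A.filter (fun x => x % d = a % d)).max' hne + d) % d
          = (A.filter (fun x => x % d = a % d)).max' hne % d := by
        conv_lhs => rw [show (A.filter (fun x => x % d = a % d)).max' hne + d
          = (A.filter (fun x => x % d = a % d)).max' hne + d * 1 by ring]
        rw [Int.add_mul_emod_self_left]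
      rw [h2, hmem.2]
    have := Finset.le_max' _ _ hmm
    omega
  · intro c₁ h₁ c₂ h₂ heq
    rw [Finset.mem_coe] at h₁ h₂
    obtain ⟨a₁, ha₁, rfl⟩ := Finset.mem_image.mp h₁
    obtain ⟨a₂, ha₂, rfl⟩ := Finset.mem_image.mp h₂
    have hne₁ : (A.filter (fun x => x % d = a₁ % d)).Nonempty := ⟨a₁, by simp [ha₁]⟩
    have hne₂ : (A.filter (fun x => x % d = a₂ % d)).Nonempty := ⟨a₂, by simp [ha₂]⟩
    simp only [dif_pos hne₁, dif_pos hne₂] at heq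
    have heq' : (A.filter (fun x => x % d = a₁ % d)).max' hne₁
        = (A.filter (fun x => x % d = a₂ % d)).max' hne₂ := by omega
    have hm₁ := (A.filter (fun x => x % d = a₁ % d)).max'_mem hne₁
    have hm₂ := (A.filter (fun x => x % d = a₂ % d)).max'_mem hne₂
    rw [Finset.mem_filter] at hm₁ hm₂
    rw [← hm₁.2, ← hm₂.2, heq']

theorem stmt_0 (A B : Finset ℤ) (hA : A.Nonempty) (hB : B.Nonempty)
    (hcard : B.card ≤ A.card) :
    ∃ b₁ ∈ B, ∃ b₂ ∈ B, ∃ b₃ ∈ B,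
      A.card + B.card - 1 ≤ (A + ({b₁, b₂, b₃} : Finset ℤ)).card := by
  classical
  by_cases hk1 : B.card ≤ 1
  · have hB1 : B.card = 1 := le_antisymm hk1 (Finset.card_pos.mpr hB)
    obtain ⟨b, rfl⟩ := Finset.card_eq_one.mp hB1
    refine ⟨b, by simp, b, by simp, b, by simp, ?_⟩
    have h3 : ({b, b, b} : Finset ℤ) = {b} := by ext w; simp
    rw [h3, add_singleton', Finset.card_image_of_injective _ (add_left_injective b)]
    simp
  push_neg at hk1
  set b₁ := B.min' hB with hb₁def
  set b₃ := B.max' hB with hb₃def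
  have hb₁B : b₁ ∈ B := B.min'_mem hB
  have hb₃B : b₃ ∈ B := B.max'_mem hB
  have hlt : b₁ < b₃ := B.min'_lt_max'_of_card hk1
  set d := b₃ - b₁ with hddef
  have hd : 0 < d := by omega
  set R := A.image (· % d) with hRdef
  set r := R.card with hrdef
  have hr1 : 1 ≤ r := Finset.card_pos.mpr (hA.image _)
  have hsd : r ≤ ((A.image (· + d)) \ A).card := aux1 A d hd
  have hsd2 := Finset.card_sdiff_add_card (A.image (· + d)) A
  have hU : A.card + r ≤ (A ∪ A.image (· + d)).card := by
    rw [Finset.union_comm]; omega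
  have himg13 : (A.image (· + b₁)) ∪ (A.image (· + b₃))
      = (A ∪ A.image (· + d)).image (· + b₁) := by
    rw [Finset.image_union, Finset.image_image]
    congr 1
    apply Finset.image_congr
    intro a _
    simp only [Function.comp_apply]
    omega
  have hcard13 : ((A ∪ A.image (· + d)).image (· + b₁)).card = (A ∪ A.image (· + d)).card :=
    Finset.card_image_of_injective _ (add_left_injective b₁)
  by_cases hrk : B.card ≤ r + 1
  · refine ⟨b₁, hb₁B, b₁, hb₁B, b₃, hb₃B, ?_⟩
    rw [triple_eq, himg13]
    have h1 : ((A ∪ A.image (· + d)).image (· + b₁)).card ≤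
        (((A ∪ A.image (· + d)).image (· + b₁)) ∪ A.image (· + b₁)).card :=
      Finset.card_le_card Finset.subset_union_left
    omega
  push_neg at hrk
  set M := B.filter (fun b => ¬ ((b - b₁) % d = 0)) with hMdef
  have hMmem : ∀ b ∈ M, b ∈ B ∧ ¬ ((b - b₁) % d = 0) := by
    intro b hb; rw [hMdef, Finset.mem_filter] at hb; exact hb
  have hMrange : ∀ b ∈ M, b₁ < b ∧ b < b₃ := by
    intro b hb
    obtain ⟨hbB, hb0⟩ := hMmem b hb
    have h1 : b₁ ≤ b := B.min'_le b hbB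
    have h2 : b ≤ b₃ := B.le_max' b hbB
    constructor
    · rcases eq_or_lt_of_le h1 with h | h
      · exfalso; apply hb0; rw [← h]; simp
      · exact h
    · rcases eq_or_lt_of_le h2 with h | h
      · exfalso; apply hb0; rw [h]; simp [hddef]
      · exact h
  have hMcard : B.card ≤ M.card + 2 := by
    have hsplit := Finset.card_filter_add_card_filter_not (s := B)
      (p := fun b => ¬ ((b - b₁) % d = 0))
    rw [← hMdef] at hsplit
    have hsub2 : B.filter (fun b => ¬¬((b - b₁) % d = 0)) ⊆ {b₁, b₃} := by
      intro b hb
      rw [Finset.mem_filter, not_not] at hb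
      obtain ⟨hbB, hb0⟩ := hb
      have h1 : b₁ ≤ b := B.min'_le b hbB
      have h2 : b ≤ b₃ := B.le_max' b hbB
      have hdvd : d ∣ (b - b₁) := Int.dvd_of_emod_eq_zero hb0
      rcases eq_or_lt_of_le h2 with h | h
      · simp [h]
      · have := dvd_zero_of_close hdvd (by omega) (by omega)
        have hb1 : b = b₁ := by omega
        simp [hb1]
    have hle2 : (B.filter (fun b => ¬¬((b - b₁) % d = 0))).card ≤ 2 := by
      refine le_trans (Finset.card_le_card hsub2) ?_
      refine le_trans (Finset.card_insert_le _ _) ?_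
      simp
    omega
  have hMne : M.Nonempty := Finset.card_pos.mp (by omega)
  set c₀ := B.card - 1 - r with hc₀def
  have key : ∀ a ∈ A, c₀ ≤ (M.filter (fun b => ¬ ((a + b - b₁) % d ∈ R))).card := by
    intro a ha
    have hsplit := Finset.card_filter_add_card_filter_not (s := M)
      (p := fun b => (a + b - b₁) % d ∈ R)
    have haR : a % d ∈ R := Finset.mem_image.mpr ⟨a, ha, rfl⟩
    have hin : (M.filter (fun b => (a + b - b₁) % d ∈ R)).card ≤ r - 1 := by
      have hinj : (M.filter (fun b => (a + b - b₁) % d ∈ R)).card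
          ≤ (R.erase (a % d)).card := by
        apply Finset.card_le_card_of_injOn (fun b => (a + b - b₁) % d)
        · intro b hb
          rw [Finset.mem_coe, Finset.mem_filter] at hb
          rw [Finset.mem_coe]
          refine Finset.mem_erase.mpr ⟨?_, hb.2⟩
          intro heq
          have hdvd : d ∣ (a + b - b₁) - a := (show Int.ModEq d a (a + b - b₁) from heq.symm).dvd
          have hdvd' : d ∣ (b - b₁) := by
            rw [show (a + b - b₁) - a = b - b₁ by ring] at hdvd; exact hdvd
          exact (hMmem b hb.1).2 (Int.emod_eq_zero_of_dvd hdvd')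
        · intro b hb b' hb' heq
          rw [Finset.mem_coe, Finset.mem_filter] at hb hb'
          have hdvd : d ∣ (a + b' - b₁) - (a + b - b₁) :=
            (show Int.ModEq d (a + b - b₁) (a + b' - b₁) from heq).dvd
          have hdvd' : d ∣ (b' - b) := by
            rw [show (a + b' - b₁) - (a + b - b₁) = b' - b by ring] at hdvd; exact hdvd
          have hr1 := hMrange b hb.1
          have hr2 := hMrange b' hb'.1
          have := dvd_zero_of_close hdvd' (by omega) (by omega)
          omega
      rw [Finset.card_erase_of_mem haR] at hinj
      exact hinj
    omega
  have hswap : ∑ b ∈ M, (A.filter (fun a => ¬ ((a + b - b₁) % d ∈ R))).card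
      = ∑ a ∈ A, (M.filter (fun b => ¬ ((a + b - b₁) % d ∈ R))).card := by
    simp_rw [Finset.card_filter]
    exact Finset.sum_comm
  have hMA : M.card ≤ A.card := le_trans (Finset.card_le_card (Finset.filter_subset _ _)) hcard
  have hsum : ∑ b ∈ M, c₀ ≤ ∑ b ∈ M, (A.filter (fun a => ¬ ((a + b - b₁) % d ∈ R))).card := by
    rw [hswap, Finset.sum_const, smul_eq_mul]
    calc M.card * c₀ ≤ A.card * c₀ := Nat.mul_le_mul_right _ hMA
    _ = ∑ a ∈ A, c₀ := by rw [Finset.sum_const, smul_eq_mul]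
    _ ≤ _ := Finset.sum_le_sum key
  obtain ⟨b, hbM, hWb⟩ := Finset.exists_le_of_sum_le hMne hsum
  refine ⟨b₁, hb₁B, b, (hMmem b hbM).1, b₃, hb₃B, ?_⟩
  rw [triple_eq]
  have hNsub : ((A.filter (fun a => ¬ ((a + b - b₁) % d ∈ R))).image (· + b))
      ⊆ A.image (· + b) := Finset.image_subset_image (Finset.filter_subset _ _)
  have hbig : ((A ∪ A.image (· + d)).image (· + b₁))
      ∪ ((A.filter (fun a => ¬ ((a + b - b₁) % d ∈ R))).image (· + b))
      ⊆ (A.image (· + b₁) ∪ A.image (· + b₃)) ∪ A.image (· + b) := by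
    rw [himg13]
    exact Finset.union_subset_union (le_refl _) hNsub
  have hdisj : Disjoint ((A ∪ A.image (· + d)).image (· + b₁))
      ((A.filter (fun a => ¬ ((a + b - b₁) % d ∈ R))).image (· + b)) := by
    rw [Finset.disjoint_right]
    intro x hx hx'
    obtain ⟨a, ha, rfl⟩ := Finset.mem_image.mp hx
    rw [Finset.mem_filter] at ha
    obtain ⟨y, hy, hyx⟩ := Finset.mem_image.mp hx'
    have hyR : y % d ∈ R := by
      rcases Finset.mem_union.mp hy with h | h
      · exact Finset.mem_image.mpr ⟨y, h, rfl⟩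
      · obtain ⟨a', ha', rfl⟩ := Finset.mem_image.mp h
        have : (a' + d) % d = a' % d := by
          conv_lhs => rw [show a' + d = a' + d * 1 by ring]
          rw [Int.add_mul_emod_self_left]
        rw [this]
        exact Finset.mem_image.mpr ⟨a', ha', rfl⟩
    apply ha.2
    have : a + b - b₁ = y := by omega
    rw [this]
    exact hyR
  have hcardN : ((A.filter (fun a => ¬ ((a + b - b₁) % d ∈ R))).image (· + b)).card
      = (A.filter (fun a => ¬ ((a + b - b₁) % d ∈ R))).card :=
    Finset.card_image_of_injective _ (add_left_injective b)
  have hfinal := Finset.card_le_card hbig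
  rw [Finset.card_union_of_disjoint hdisj, hcard13, hcardN] at hfinal
  omega
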